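/- For letters x_1 < x_2 < ... < x_p < y < z_1 < ... < z_q in a totally ordered alphabet, the words (x_1...x_p)(z_1...z_q)y and (z_1...z_q)(x_1...x_p)y are congruent modulo the stylic congruence. -/

import Mathlib

noncomputable section

open FreeMonoid

/-- The defining relations of the stylic congruence: the Knuth (plactic)
relations together with the idempotent relations `a² ≡ a`. -/
inductive StylicRel (A : Type*) [LinearOrder A] : FreeMonoid A → FreeMonoid A → Prop
  | knuth1 {a b c : A} : a < b → b < c →
      StylicRel A (ofList [b, a, c]) (ofList [b, c, a])
  | knuth2 {a b c : A} : a < b → b < c →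
      StylicRel A (ofList [a, c, b]) (ofList [c, a, b])
  | knuth3 {a b : A} : a < b →
      StylicRel A (ofList [b, a, b]) (ofList [b, b, a])
  | knuth4 {a b : A} : a < b →
      StylicRel A (ofList [a, b, a]) (ofList [b, a, a])
  | idem (a : A) : StylicRel A (ofList [a, a]) (ofList [a])

/-- The stylic congruence on the free monoid `A*`. -/
def stylCon (A : Type*) [LinearOrder A] : Con (FreeMonoid A) := conGen (StylicRel A)

/-- The stylic monoid `Styl(A)`. -/
abbrev Styl (A : Type*) [LinearOrder A] := (stylCon A).Quotient

section Aux

variable {A : Type*} [LinearOrder A]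

lemma stylCon_of {u v : FreeMonoid A} (h : StylicRel A u v) : stylCon A u v :=
  ConGen.Rel.of _ _ h

lemma stylCon_ctx {u v : List A} (h : stylCon A (ofList u) (ofList v))
    (l r : List A) : stylCon A (ofList (l ++ u ++ r)) (ofList (l ++ v ++ r)) := by
  simpa only [ofList_append] using
    (stylCon A).mul ((stylCon A).mul ((stylCon A).refl (ofList l)) h)
      ((stylCon A).refl (ofList r))

/-- Moving a big letter `c` to the left across an increasing word. -/
lemma stylCon_moveLeft (c : A) : ∀ (l : List A) (d : A) (t : List A),
    List.Chain' (· < ·) (l ++ [d]) → (∀ a ∈ l ++ [d], a < c) →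
    stylCon A (ofList (l ++ c :: d :: t)) (ofList (c :: (l ++ d :: t)))
  | [], d, t, _, _ => (stylCon A).refl _
  | a :: l, d, t, hch, hlt => by
    have hch' : List.Chain' (· < ·) (l ++ [d]) := hch.tail
    have hlt' : ∀ b ∈ l ++ [d], b < c := fun b hb => hlt b (List.mem_cons_of_mem a hb)
    have ih := stylCon_moveLeft c l d t hch' hlt'
    have h1 : stylCon A (ofList (a :: (l ++ c :: d :: t)))
        (ofList (a :: c :: (l ++ d :: t))) := by
      simpa using stylCon_ctx ih [a] []
    refine ((stylCon A).trans (by simpa using h1)) ?_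
    -- now swap the leading `a` and `c`
    cases l with
    | nil =>
      have had : a < d := by
        have := hch; simp only [List.nil_append, List.cons_append] at this
        exact (List.isChain_cons_cons.mp this).1
      have hdc : d < c := hlt' d (by simp)
      simpa using stylCon_ctx (stylCon_of (StylicRel.knuth2 had hdc)) [] t
    | cons e l' =>
      have hae : a < e := by
        have := hch; simp only [List.cons_append] at this
        exact (List.isChain_cons_cons.mp this).1
      have hec : e < c := hlt' e (by simp)
      simpa [mul_assoc] using stylCon_ctx (stylCon_of (StylicRel.knuth2 hae hec)) [] (l' ++ d :: t)

lemma stylCon_key (Z : List A) : ∀ (X : List A) (y : A),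
    List.Chain' (· < ·) X → (∀ a ∈ X, a < y) → (∀ b ∈ Z, y < b) →
    stylCon A (ofList (X ++ Z ++ [y])) (ofList (Z ++ X ++ [y])) := by
  induction Z using List.reverseRecOn with
  | nil => intro X y _ _ _; simp; exact (stylCon A).refl _
  | append_singleton Z' c ih =>
    intro X y hX hXy hZy
    have hyc : y < c := hZy c (by simp)
    have hZ'y : ∀ b ∈ Z', y < b := fun b hb => hZy b (by simp [hb])
    have hchXy : List.Chain' (· < ·) (X ++ [y]) := by
      apply List.isChain_append.mpr
      exact ⟨hX, by simp, fun a ha b hb => by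
        simp at hb; subst hb; exact hXy a (List.mem_of_mem_getLast? ha)⟩
    have h01 : stylCon A (ofList (X ++ (Z' ++ [c, y])))
        (ofList (X ++ (Z' ++ [c, y, y]))) := by
      simpa using stylCon_ctx ((stylCon A).symm (stylCon_of (StylicRel.idem y)))
        (X ++ Z' ++ [c]) []
    have h12 : stylCon A (ofList (X ++ (Z' ++ [c, y, y])))
        (ofList (X ++ (Z' ++ [y, c, y]))) := by
      simpa using stylCon_ctx ((stylCon A).symm (stylCon_of (StylicRel.knuth4 hyc)))
        (X ++ Z') []
    have h23 : stylCon A (ofList (X ++ (Z' ++ [y, c, y])))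
        (ofList (Z' ++ (X ++ [y, c, y]))) := by
      simpa using stylCon_ctx (ih X y hX hXy hZ'y) [] [c, y]
    have h34 : stylCon A (ofList (Z' ++ (X ++ [y, c, y])))
        (ofList (Z' ++ (X ++ [c, y, y]))) := by
      simpa using stylCon_ctx (stylCon_of (StylicRel.knuth4 hyc)) (Z' ++ X) []
    have h45 : stylCon A (ofList (Z' ++ (X ++ [c, y, y])))
        (ofList (Z' ++ (c :: (X ++ [y, y])))) := by
      have hm := stylCon_moveLeft c X y [y] hchXy
        (fun a ha => by
          rcases List.mem_append.mp ha with h | h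
          · exact lt_trans (hXy a h) hyc
          · simp at h; subst h; exact hyc)
      simpa using stylCon_ctx hm Z' []
    have h56 : stylCon A (ofList (Z' ++ (c :: (X ++ [y, y]))))
        (ofList (Z' ++ (c :: (X ++ [y])))) := by
      simpa using stylCon_ctx (stylCon_of (StylicRel.idem y)) (Z' ++ c :: X) []
    have := (((((h01.trans h12).trans h23).trans h34).trans h45).trans h56)
    simp at this ⊢; exact this

end Aux

/-- Lemma `superplax`, first identity: for letters
`x₁ < ⋯ < x_p < y < z₁ < ⋯ < z_q`, the words `(x₁⋯x_p)(z₁⋯z_q)y` and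
`(z₁⋯z_q)(x₁⋯x_p)y` are stylically congruent. -/
theorem stylic_superplax_left {A : Type*} [LinearOrder A] {p q : ℕ}
    (hp : 1 ≤ p) (hq : 1 ≤ q) (x : Fin p → A) (z : Fin q → A) (y : A)
    (hx : StrictMono x) (hz : StrictMono z)
    (hxy : ∀ i, x i < y) (hyz : ∀ j, y < z j) :
    stylCon A (ofList (List.ofFn x ++ List.ofFn z ++ [y]))
      (ofList (List.ofFn z ++ List.ofFn x ++ [y])) := by
  apply stylCon_key
  · simp only [List.Chain']; rw [List.isChain_iff_pairwise, List.pairwise_ofFn]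
    exact fun i j h => hx h
  · intro a ha
    rcases List.mem_ofFn.mp ha with ⟨i, rfl⟩
    exact hxy i
  · intro b hb
    rcases List.mem_ofFn.mp hb with ⟨j, rfl⟩
    exact hyz j
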